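/- Let K = [−1,1] ⊆ ℝ and let 0 < η ≤ 1. Define f₊(y) = y and f₋(y) = −y. Then for every x ∈ [−1,1], at least one of |∇_{K,η} f₊(x)| = 1 or |∇_{K,η} f₋(x)| = 1 holds. -/

import Mathlib

open RealInnerProductSpace

/- Euclidean (nearest-point) projection onto a set `K`.  For a nonempty closed
convex set in a complete inner product space this is the usual orthogonal
projection onto `K`. -/
open Classical in
noncomputable def projOn {E : Type*} [NormedAddCommGroup E] [InnerProductSpace ℝ E]
    (K : Set E) (u : E) : E :=
  if h : ∃ v, v ∈ K ∧ ∀ w ∈ K, ‖u - v‖ ≤ ‖u - w‖ then h.choose else u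

/- The `(K, η)`-projected gradient of `f` at `x`:
`∇_{K,η} f(x) = (1/η) (x − Π_K[x − η ∇f(x)])`. -/
noncomputable def projGrad {E : Type*} [NormedAddCommGroup E] [InnerProductSpace ℝ E]
    [CompleteSpace E] (K : Set E) (η : ℝ) (f : E → ℝ) (x : E) : E :=
  (1 / η) • (x - projOn K (x - η • gradient f x))

lemma grad_id (x : ℝ) : gradient (fun y : ℝ => y) x = 1 := by
  simp only [gradient]
  have h := InnerProductSpace.toDual_symm_apply (𝕜 := ℝ)
    (y := fderiv ℝ (fun y : ℝ => y) x) (x := (1:ℝ))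
  have h2 : ⟪(InnerProductSpace.toDual ℝ ℝ).symm (fderiv ℝ (fun y : ℝ => y) x), (1:ℝ)⟫
      = (InnerProductSpace.toDual ℝ ℝ).symm (fderiv ℝ (fun y : ℝ => y) x) * 1 := by
    rw [RCLike.inner_apply', conj_trivial]
  rw [h2] at h
  simpa using h

lemma grad_neg (x : ℝ) : gradient (fun y : ℝ => -y) x = -1 := by
  have hd : fderiv ℝ (fun y : ℝ => -y) x = -(ContinuousLinearMap.id ℝ ℝ) :=
    ((hasFDerivAt_id x).neg).fderiv
  simp only [gradient, hd]
  have h := InnerProductSpace.toDual_symm_apply (𝕜 := ℝ)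
    (y := -(ContinuousLinearMap.id ℝ ℝ)) (x := (1:ℝ))
  have h2 : ⟪(InnerProductSpace.toDual ℝ ℝ).symm (-(ContinuousLinearMap.id ℝ ℝ)), (1:ℝ)⟫
      = (InnerProductSpace.toDual ℝ ℝ).symm (-(ContinuousLinearMap.id ℝ ℝ)) * 1 := by
    rw [RCLike.inner_apply', conj_trivial]
  rw [h2] at h
  simpa using h

lemma projOn_Icc_mem (u : ℝ) (hu : u ∈ Set.Icc (-1:ℝ) 1) :
    projOn (Set.Icc (-1:ℝ) 1) u = u := by
  have hex : ∃ v, v ∈ Set.Icc (-1:ℝ) 1 ∧ ∀ w ∈ Set.Icc (-1:ℝ) 1, ‖u - v‖ ≤ ‖u - w‖ :=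
    ⟨u, hu, fun w _ => by simp⟩
  rw [projOn, dif_pos hex]
  have h := hex.choose_spec
  have := h.2 u hu
  simp only [sub_self, norm_zero] at this
  have : ‖u - hex.choose‖ = 0 := le_antisymm this (norm_nonneg _)
  have := norm_eq_zero.mp this
  linarith [sub_eq_zero.mp this]

/-- On `K = [−1,1] ⊆ ℝ` with `0 < η ≤ 1`, for `f₊(y) = y` and
`f₋(y) = −y`, every `x ∈ [−1,1]` has `|∇_{K,η} f₊(x)| = 1` or
`|∇_{K,η} f₋(x)| = 1`. -/
theorem projGrad_pm_one (η : ℝ) (hη0 : 0 < η) (hη1 : η ≤ 1)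
    (x : ℝ) (hx : x ∈ Set.Icc (-1 : ℝ) 1) :
    |projGrad (Set.Icc (-1 : ℝ) 1) η (fun y => y) x| = 1 ∨
    |projGrad (Set.Icc (-1 : ℝ) 1) η (fun y => -y) x| = 1 := by
  obtain ⟨hx1, hx2⟩ := hx
  by_cases h : -1 ≤ x - η
  · left
    rw [projGrad, grad_id]
    simp only [smul_eq_mul, mul_one]
    rw [projOn_Icc_mem _ ⟨h, by linarith⟩]
    have : x - (x - η) = η := by ring
    rw [this]
    field_simp
    exact abs_one
  · right
    push_neg at h
    rw [projGrad, grad_neg]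
    simp only [smul_eq_mul, mul_neg_one, sub_neg_eq_add]
    rw [projOn_Icc_mem _ ⟨by linarith, by linarith⟩]
    have : x - (x + η) = -η := by ring
    rw [this]
    rw [abs_eq (by norm_num)]
    right
    field_simp
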